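/- Let $g \ge 3$ and let $G$ be a group containing elements $c_1,\dots,c_{2g+1}$ and $x_1,\dots,x_g$. Set $\bar d_i = c_{i+1}^{-1} c_i c_{i+1}$, $e_{i+1} = c_i c_{i+1} c_i^{-1}$, and $\varphi = c_{2g+1}^{g+1} c_{2g-1}^{g} \cdots c_5^{3} c_3^{2} c_1$. Assume: (i) $c_1,\dots,c_{2g+1}$ satisfy the braid relations; (ii) the hyperelliptic relation $(c_1 c_2 \cdots c_{2g-1} c_{2g} c_{2g+1}^2 c_{2g} c_{2g-1} \cdots c_2 c_1)^2 = 1$ holds; (iii) the element $c_{2g} c_{2g-1} \cdots c_2 c_1 c_1 c_2 \cdots c_{2g-1} c_{2g}$ commutes with $c_{2g+1}$; (iv) the daisy relation $x_1 x_2 \cdots x_g = c_1 c_3 c_5 \cdots c_{2g-1} \cdot c_{2g+1}^{g-2}$ holds. Then $(\varphi^{-1} \bar d_{2g} \varphi)(\varphi^{-1} \bar d_{2g-1} \varphi) \cdots (\varphi^{-1} \bar d_2 \varphi)(\varphi^{-1} \bar d_1 \varphi) \cdot \bar d_2 \bar d_4 \cdots \bar d_{2g} \cdot e_2 e_4 \cdots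 e_{2g} \cdot x_1 x_2 \cdots x_g \cdot c_{2g+1}^{2g+6} = 1$. -/

import Mathlib

/-- The product `a k * a (k-1) * ⋯ * a m` (descending indices). -/
def prodDesc {G : Type*} [Group G] (a : ℕ → G) (k m : ℕ) : G :=
  ((List.range (k + 1 - m)).map fun i => a (k - i)).prod

/-- The product `a m * a (m+1) * ⋯ * a k` (ascending indices). -/
def prodAsc {G : Type*} [Group G] (a : ℕ → G) (m k : ℕ) : G :=
  ((List.range (k + 1 - m)).map fun i => a (m + i)).prod

/-- `φ = a (2g+1) ^ (g+1) * a (2g-1) ^ g * ⋯ * a 5 ^ 3 * a 3 ^ 2 * a 1`. -/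
def phiOdd {G : Type*} [Group G] (a : ℕ → G) (l : ℕ) : G :=
  ((List.range (l + 1)).map fun j => a (2 * (l - j) + 1) ^ (l - j + 1)).prod

namespace St16
variable {G : Type*} [Group G]

theorem prod_conj {α : Type*} (l : List α) (f : α → G) (k : G) :
    (l.map fun i => k⁻¹ * f i * k).prod = k⁻¹ * (l.map f).prod * k := by
  induction l with
  | nil => simp
  | cons x xs ih => simp only [List.map_cons, List.prod_cons, ih]; group

theorem range_front (n : ℕ) (f : ℕ → G) :
    ((List.range (n+1)).map f).prod = f 0 * ((List.range n).map fun i => f (i+1)).prod := by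
  rw [List.range_succ_eq_map, List.map_cons, List.prod_cons, List.map_map]
  rfl

theorem range_back (n : ℕ) (f : ℕ → G) :
    ((List.range (n+1)).map f).prod = ((List.range n).map f).prod * f n := by
  rw [List.range_succ]; simp

theorem commute_listprod {x : G} (l : List ℕ) (f : ℕ → G)
    (h : ∀ j ∈ l, Commute x (f j)) : Commute x ((l.map f).prod) :=
  Commute.list_prod_right _ _ (by
    intro y hy
    obtain ⟨j, hj, rfl⟩ := List.mem_map.1 hy
    exact h j hj)

end St16

namespace St16
variable {G : Type*} [Group G]

section Triple
variable (a b t : G)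

theorem Aat (hat : a*t = t*a) : ∀ X : G, a*(t*X) = t*(a*X) := fun X => by
  rw [← mul_assoc, hat, mul_assoc]

theorem Aaba (hab : a*b*a = b*a*b) : ∀ X : G, a*(b*(a*X)) = b*(a*(b*X)) := fun X => by
  calc a*(b*(a*X)) = (a*b*a)*X := by group
  _ = (b*a*b)*X := by rw [hab]
  _ = b*(a*(b*X)) := by group

theorem Abtb (hbt : b*t*b = t*b*t) : ∀ X : G, b*(t*(b*X)) = t*(b*(t*X)) := fun X => by
  calc b*(t*(b*X)) = (b*t*b)*X := by group
  _ = (t*b*t)*X := by rw [hbt]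
  _ = t*(b*(t*X)) := by group

theorem AatPow (hat : a*t = t*a) : ∀ (n : ℕ) (X : G), a^n*(t*X) = t*(a^n*X) := fun n X => by
  have h : Commute (a^n) t := Commute.pow_left hat n
  rw [← mul_assoc, h.eq, mul_assoc]

theorem AtaPow (hat : a*t = t*a) : ∀ (n : ℕ) (X : G), t^n*(a*X) = a*(t^n*X) := fun n X => by
  have h : Commute a (t^n) := Commute.pow_right hat n
  rw [← mul_assoc, ← h.eq, mul_assoc]

/-- (†): t·t·b·t·a·b·t = a·b·t·a·b·a·a, with universal tail. -/
theorem dagger (hab : a*b*a = b*a*b) (hbt : b*t*b = t*b*t) (hat : a*t = t*a) :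
    ∀ X : G, t*(t*(b*(t*(a*(b*(t*X)))))) = a*(b*(t*(a*(b*(a*(a*X)))))) := by
  intro X
  -- ttbtabt → ttbatbt  (a t swap inside: use ← Aat at the 'a*(b..' no: move t*X? follow BFS)
  calc t*(t*(b*(t*(a*(b*(t*X))))))
      = t*(t*(b*(a*(t*(b*(t*X)))))) := by rw [Aat a t hat (b*(t*X))]
    _ = t*(t*(b*(a*(b*(t*(b*X))))))  := by rw [← Abtb b t hbt X]
    _ = t*(t*(a*(b*(a*(t*(b*X))))))  := by rw [← Aaba a b hab (t*(b*X))]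
    _ = t*(a*(t*(b*(a*(t*(b*X))))))  := by rw [← Aat a t hat (b*(a*(t*(b*X))))]
    _ = a*(t*(t*(b*(a*(t*(b*X))))))  := by rw [← Aat a t hat (t*(b*(a*(t*(b*X)))))]
    _ = a*(t*(t*(b*(t*(a*(b*X))))))  := by rw [Aat a t hat (b*X)]
    _ = a*(t*(b*(t*(b*(a*(b*X))))))  := by rw [← Abtb b t hbt (a*(b*X))]
    _ = a*(b*(t*(b*(b*(a*(b*X))))))  := by rw [← Abtb b t hbt (b*(a*(b*X)))]
    _ = a*(b*(t*(b*(a*(b*(a*X))))))  := by rw [Aaba a b hab X]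
    _ = a*(b*(t*(a*(b*(a*(a*X))))))  := by rw [Aaba a b hab (a*X)]

end Triple
end St16

namespace St16
variable {G : Type*} [Group G]
section Triple2
variable (a b t : G)

theorem AatPP (hat : a*t = t*a) : ∀ (n m : ℕ) (X : G), a^n*(t^m*X) = t^m*(a^n*X) := fun n m X => by
  have h : Commute (a^n) (t^m) := Commute.pow_pow hat n m
  rw [← mul_assoc, h.eq, mul_assoc]

theorem cancel_tbtb (hbt : b*t*b = t*b*t) : ∀ X : G, t*(b*(t*(b⁻¹*X))) = b*(t*X) := fun X => by
  calc t*(b*(t*(b⁻¹*X))) = (b*t*b)*(b⁻¹*X) := by rw [hbt]; group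
  _ = b*(t*X) := by group

/-- (♦): t^(2h+1)·(btb⁻¹)·(ab)·t^(h+1) = a^(h+1)·(bt)·(ab)·a^(2h), universal tail. -/
theorem diamond (hab : a*b*a = b*a*b) (hbt : b*t*b = t*b*t) (hat : a*t = t*a) :
    ∀ (h : ℕ) (X : G),
    t^(2*h+1) * (b*(t*(b⁻¹*(a*(b*(t^(h+1) * X)))))) = a^(h+1) * (b*(t*(a*(b*(a^(2*h) * X))))) := by
  intro h
  induction h with
  | zero =>
    intro X
    simp only [Nat.mul_zero, Nat.zero_add, pow_one, pow_zero, one_mul]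
    rw [cancel_tbtb b t hbt (a*(b*(t*X)))]
    calc b*(t*(a*(b*(t*X))))
        = b*(a*(t*(b*(t*X)))) := by rw [← Aat a t hat (b*(t*X))]
      _ = b*(a*(b*(t*(b*X)))) := by rw [← Abtb b t hbt X]
      _ = a*(b*(a*(t*(b*X)))) := by rw [← Aaba a b hab (t*(b*X))]
      _ = a*(b*(t*(a*(b*X)))) := by rw [Aat a t hat (b*X)]
  | succ h ih =>
    intro X
    have e1 : 2*(h+1)+1 = 2+(2*h+1) := by ring
    have e2 : h+1+1 = (h+1)+1 := rfl
    rw [e1, pow_add, mul_assoc]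
    rw [show (h+1)+1 = (h+1)+1 from rfl]
    rw [show t^(h+1+1) = t^(h+1)*t from pow_succ t (h+1)]
    rw [show (t^(h+1)*t)*X = t^(h+1)*(t*X) from mul_assoc _ _ _]
    rw [ih (t*X)]
    rw [AatPow a t hat (2*h) X]
    rw [← AatPP a t hat (h+1) 2 (b*(t*(a*(b*(t*(a^(2*h)*X))))))]
    rw [show (t:G)^2 = t*t from pow_two t, mul_assoc]
    rw [dagger a b t hab hbt hat (a^(2*h)*X)]
    group

theorem S1aux (hab : a*b*a = b*a*b) (hbt : b*t*b = t*b*t) (hat : a*t = t*a) :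
    ∀ X : G, b*(t*(a*(b*(a*(a*X))))) = t*(b*(a*(t*(b*(a*X))))) := fun X => by
  calc b*(t*(a*(b*(a*(a*X)))))
      = b*(t*(b*(a*(b*(a*X))))) := by rw [Aaba a b hab (a*X)]
    _ = t*(b*(t*(a*(b*(a*X))))) := by rw [Abtb b t hbt (a*(b*(a*X)))]
    _ = t*(b*(a*(t*(b*(a*X))))) := by rw [← Aat a t hat (b*(a*X))]

end Triple2
end St16
namespace St16
variable {G : Type*} [Group G]

/-- `c (i+1)⁻¹ * c i * c (i+1)` -/
def db (c : ℕ → G) (i : ℕ) : G := (c (i+1))⁻¹ * c i * c (i+1)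
/-- `d (2h) * d (2h-1) * ⋯ * d 1` -/
def DD (c : ℕ → G) (h : ℕ) : G := ((List.range (2*h)).map fun j => db c (2*h - j)).prod
/-- `c k * c (k-1) * ⋯ * c 1` -/
def sb (c : ℕ → G) (k : ℕ) : G := ((List.range k).map fun i => c (k - i)).prod
/-- `c 1 * c 2 * ⋯ * c k` -/
def ac (c : ℕ → G) (k : ℕ) : G := ((List.range k).map fun i => c (1 + i)).prod
/-- `c 2 * c 3 * ⋯ * c (k+1)` -/
def ac2 (c : ℕ → G) (k : ℕ) : G := ((List.range k).map fun i => c (2 + i)).prod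
def Psi0 (c : ℕ → G) (l : ℕ) : G := ((List.range l).map fun k => c (2*k+3) ^ (k+2)).prod
def Chi (c : ℕ → G) (h : ℕ) : G := ((List.range h).map fun k => c (2*k+1) ^ (k+2)).prod
def Pk (c : ℕ → G) (h : ℕ) : G := ((List.range h).map fun k => c (2*k+1)).prod
def Qk (c : ℕ → G) (h : ℕ) : G := ((List.range h).map fun k => c (2*k+2)).prod

theorem map_range_prod_congr (n : ℕ) (f g : ℕ → G) (h : ∀ i, i < n → f i = g i) :
    ((List.range n).map f).prod = ((List.range n).map g).prod := by
  rw [List.map_congr_left (fun i hi => h i (List.mem_range.1 hi))]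

variable (c : ℕ → G)

theorem sb_succ (k : ℕ) : sb c (k+1) = c (k+1) * sb c k := by
  unfold sb
  rw [range_front, Nat.sub_zero,
    map_range_prod_congr k _ (fun i => c (k - i)) (fun i _ => by congr 1; omega)]

theorem ac_succ (k : ℕ) : ac c (k+1) = ac c k * c (k+1) := by
  unfold ac
  rw [range_back, Nat.add_comm 1 k]

theorem ac2_succ (k : ℕ) : ac2 c (k+1) = ac2 c k * c (k+2) := by
  unfold ac2
  rw [range_back, Nat.add_comm 2 k]

theorem ac_front (k : ℕ) : ac c (k+1) = c 1 * ac2 c k := by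
  unfold ac ac2
  rw [range_front,
    map_range_prod_congr k _ (fun i => c (2 + i)) (fun i _ => by congr 1; omega)]

theorem DD_succ (h : ℕ) : DD c (h+1) = db c (2*h+2) * (db c (2*h+1) * DD c h) := by
  unfold DD
  rw [(by omega : 2*(h+1) = (2*h+1)+1), range_front, range_front, Nat.sub_zero,
    (by omega : 2*h+1+1 = 2*h+2), (by omega : 2*h+2 - (0+1) = 2*h+1),
    map_range_prod_congr (2*h) _ (fun j => db c (2*h - j)) (fun i _ => by congr 1; omega)]

theorem Psi0_succ (l : ℕ) : Psi0 c (l+1) = Psi0 c l * c (2*l+3) ^ (l+2) := by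
  unfold Psi0; rw [range_back]

theorem Chi_succ (h : ℕ) : Chi c (h+1) = Chi c h * c (2*h+1) ^ (h+2) := by
  unfold Chi; rw [range_back]

theorem Pk_succ (h : ℕ) : Pk c (h+1) = Pk c h * c (2*h+1) := by
  unfold Pk; rw [range_back]

theorem Qk_succ (h : ℕ) : Qk c (h+1) = Qk c h * c (2*h+2) := by
  unfold Qk; rw [range_back]

end St16
namespace St16
variable {G : Type*} [Group G] (c : ℕ → G) (g : ℕ)

section WithRel
variable
  (hbraid : ∀ i, 1 ≤ i → i + 1 ≤ 2 * g + 1 →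
      c i * c (i + 1) * c i = c (i + 1) * c i * c (i + 1))
  (hcomm : ∀ i j, 1 ≤ i → j ≤ 2 * g + 1 → i + 2 ≤ j → c i * c j = c j * c i)

include hcomm in
theorem comm2 (i j : ℕ) (h1 : 1 ≤ i) (h2 : j ≤ 2*g+1) (h3 : i + 2 ≤ j) :
    Commute (c i) (c j) := hcomm i j h1 h2 h3

include hcomm in
theorem commute_sb (m k : ℕ) (hk : k + 2 ≤ m) (hm : m ≤ 2*g+1) :
    Commute (c m) (sb c k) := by
  unfold sb
  refine commute_listprod _ _ (fun j hj => ?_)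
  have hj' := List.mem_range.1 hj
  exact (comm2 c g hcomm (k - j) m (by omega) hm (by omega)).symm

include hcomm in
theorem commute_ac (m k : ℕ) (hk : k + 2 ≤ m) (hm : m ≤ 2*g+1) :
    Commute (c m) (ac c k) := by
  unfold ac
  refine commute_listprod _ _ (fun j hj => ?_)
  have hj' := List.mem_range.1 hj
  exact (comm2 c g hcomm (1 + j) m (by omega) hm (by omega)).symm

include hcomm in
theorem commute_Pk (m h : ℕ) (hk : 2*h + 1 ≤ m) (hm : m ≤ 2*g+1) :
    Commute (c m) (Pk c h) := by
  unfold Pk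
  refine commute_listprod _ _ (fun j hj => ?_)
  have hj' := List.mem_range.1 hj
  exact (comm2 c g hcomm (2*j+1) m (by omega) hm (by omega)).symm

include hcomm in
theorem commute_Qk (m h : ℕ) (hk : 2*h + 2 ≤ m) (hm : m ≤ 2*g+1) :
    Commute (c m) (Qk c h) := by
  unfold Qk
  refine commute_listprod _ _ (fun j hj => ?_)
  have hj' := List.mem_range.1 hj
  exact (comm2 c g hcomm (2*j+2) m (by omega) hm (by omega)).symm

include hcomm in
theorem commute_Psi0 (m l : ℕ) (hk : 2*l + 3 ≤ m) (hm : m ≤ 2*g+1) :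
    Commute (c m) (Psi0 c l) := by
  unfold Psi0
  refine commute_listprod _ _ (fun j hj => ?_)
  have hj' := List.mem_range.1 hj
  exact ((comm2 c g hcomm (2*j+3) m (by omega) hm (by omega)).symm).pow_right _

include hcomm in
theorem commute_Chi (m h : ℕ) (hk : 2*h + 1 ≤ m) (hm : m ≤ 2*g+1) :
    Commute (c m) (Chi c h) := by
  unfold Chi
  refine commute_listprod _ _ (fun j hj => ?_)
  have hj' := List.mem_range.1 hj
  exact ((comm2 c g hcomm (2*j+1) m (by omega) hm (by omega)).symm).pow_right _

include hcomm in
theorem commute_db (m i : ℕ) (h1 : 1 ≤ i) (hk : i + 3 ≤ m) (hm : m ≤ 2*g+1) :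
    Commute (c m) (db c i) := by
  have ha : Commute (c m) (c (i+1)) :=
    (comm2 c g hcomm (i+1) m (by omega) hm (by omega)).symm
  have hb : Commute (c m) (c i) :=
    (comm2 c g hcomm i m (by omega) hm (by omega)).symm
  exact (ha.inv_right.mul_right hb).mul_right ha

include hbraid hcomm in
theorem sb_shift (i : ℕ) (h1 : 1 ≤ i) :
    ∀ k, i+1 ≤ k → k ≤ 2*g+1 → sb c k * c (i+1) = c i * sb c k := by
  intro k hk
  induction k, hk using Nat.le_induction with
  | base =>
    intro hb
    obtain ⟨i', rfl⟩ : ∃ i', i = i'+1 := ⟨i-1, by omega⟩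
    rw [sb_succ, sb_succ]
    have hcm : Commute (c (i'+1+1)) (sb c i') :=
      commute_sb c g hcomm (i'+1+1) i' (by omega) (by omega)
    have hbr := hbraid (i'+1) (by omega) (by omega)
    calc c (i'+1+1) * (c (i'+1) * sb c i') * c (i'+1+1)
        = c (i'+1+1) * c (i'+1) * (sb c i' * c (i'+1+1)) := by group
      _ = c (i'+1+1) * c (i'+1) * (c (i'+1+1) * sb c i') := by rw [← hcm.eq]
      _ = (c (i'+1+1) * c (i'+1) * c (i'+1+1)) * sb c i' := by group
      _ = (c (i'+1) * c (i'+1+1) * c (i'+1)) * sb c i' := by rw [← hbr]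
      _ = c (i'+1) * (c (i'+1+1) * (c (i'+1) * sb c i')) := by group
  | succ k hk ih =>
    intro hb
    rw [sb_succ]
    calc c (k+1) * sb c k * c (i+1)
        = c (k+1) * (sb c k * c (i+1)) := by group
      _ = c (k+1) * (c i * sb c k) := by rw [ih (by omega)]
      _ = c i * (c (k+1) * sb c k) := by
          rw [← mul_assoc, ← hcomm i (k+1) h1 hb (by omega), mul_assoc]

include hbraid hcomm in
theorem ac_shift (i : ℕ) (h1 : 1 ≤ i) :
    ∀ k, i+1 ≤ k → k ≤ 2*g+1 → ac c k * c i = c (i+1) * ac c k := by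
  intro k hk
  induction k, hk using Nat.le_induction with
  | base =>
    intro hb
    obtain ⟨i', rfl⟩ : ∃ i', i = i'+1 := ⟨i-1, by omega⟩
    rw [ac_succ, ac_succ]
    have hcm : Commute (c (i'+1+1)) (ac c i') :=
      commute_ac c g hcomm (i'+1+1) i' (by omega) (by omega)
    have hbr := hbraid (i'+1) (by omega) (by omega)
    calc ac c i' * c (i'+1) * c (i'+1+1) * c (i'+1)
        = ac c i' * (c (i'+1) * c (i'+1+1) * c (i'+1)) := by group
      _ = ac c i' * (c (i'+1+1) * c (i'+1) * c (i'+1+1)) := by rw [hbr]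
      _ = (ac c i' * c (i'+1+1)) * (c (i'+1) * c (i'+1+1)) := by group
      _ = (c (i'+1+1) * ac c i') * (c (i'+1) * c (i'+1+1)) := by rw [← hcm.eq]
      _ = c (i'+1+1) * (ac c i' * c (i'+1) * c (i'+1+1)) := by group
  | succ k hk ih =>
    intro hb
    rw [ac_succ]
    calc ac c k * c (k+1) * c i
        = ac c k * (c (k+1) * c i) := by group
      _ = ac c k * (c i * c (k+1)) := by rw [← hcomm i (k+1) h1 hb (by omega)]
      _ = (ac c k * c i) * c (k+1) := by group
      _ = (c (i+1) * ac c k) * c (k+1) := by rw [ih (by omega)]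
      _ = c (i+1) * (ac c k * c (k+1)) := by group

end WithRel
end St16
namespace St16
variable {G : Type*} [Group G] (c : ℕ → G) (g : ℕ)

section WithRel2
variable
  (hbraid : ∀ i, 1 ≤ i → i + 1 ≤ 2 * g + 1 →
      c i * c (i + 1) * c i = c (i + 1) * c i * c (i + 1))
  (hcomm : ∀ i j, 1 ≤ i → j ≤ 2 * g + 1 → i + 2 ≤ j → c i * c j = c j * c i)

include hbraid in
theorem db_swap (i : ℕ) (h1 : 1 ≤ i) (h2 : i + 1 ≤ 2*g+1) :
    (c (i+1))⁻¹ * c i * c (i+1) = c i * c (i+1) * (c i)⁻¹ := by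
  have hbr := hbraid i h1 (by omega)
  calc (c (i+1))⁻¹ * c i * c (i+1)
      = (c (i+1))⁻¹ * (c i * c (i+1) * c i) * (c i)⁻¹ := by group
    _ = (c (i+1))⁻¹ * (c (i+1) * c i * c (i+1)) * (c i)⁻¹ := by rw [hbr]
    _ = c i * c (i+1) * (c i)⁻¹ := by group

include hbraid hcomm in
theorem sbQ : ∀ h, h ≤ g → sb c (2*g+1) * Qk c h = Pk c h * sb c (2*g+1) := by
  intro h
  induction h with
  | zero => intro _; simp [Qk, Pk]
  | succ h ih =>
    intro hb
    rw [Qk_succ, Pk_succ]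
    calc sb c (2*g+1) * (Qk c h * c (2*h+2))
        = (sb c (2*g+1) * Qk c h) * c (2*h+2) := by group
      _ = (Pk c h * sb c (2*g+1)) * c (2*h+2) := by rw [ih (by omega)]
      _ = Pk c h * (sb c (2*g+1) * c (2*h+1+1)) := by group
      _ = Pk c h * (c (2*h+1) * sb c (2*g+1)) := by
          rw [sb_shift c g hbraid hcomm (2*h+1) (by omega) (2*g+1) (by omega) (by omega)]
      _ = Pk c h * c (2*h+1) * sb c (2*g+1) := by group

include hbraid hcomm in
theorem Eform : ∀ k, k ≤ g →
    ((List.range k).map fun j => (c (2*j+3))⁻¹ * c (2*j+2) * c (2*j+3)).prod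
      = ac2 c (2*k) * (Qk c k)⁻¹ := by
  intro k
  induction k with
  | zero => intro _; simp [ac2, Qk]
  | succ k ih =>
    intro hb
    rw [range_back, ih (by omega)]
    have hsw : (c (2*k+3))⁻¹ * c (2*k+2) * c (2*k+3)
        = c (2*k+2) * c (2*k+3) * (c (2*k+2))⁻¹ :=
      db_swap c g hbraid (2*k+2) (by omega) (by omega)
    have h1 : Commute (Qk c k) (c (2*k+2)) :=
      (commute_Qk c g hcomm (2*k+2) k (by omega) (by omega)).symm
    have h2 : Commute (Qk c k) (c (2*k+3)) :=
      (commute_Qk c g hcomm (2*k+3) k (by omega) (by omega)).symm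
    have h3 : Commute ((Qk c k)⁻¹) (c (2*k+2) * c (2*k+3) * (c (2*k+2))⁻¹) :=
      (((h1.mul_right h2).mul_right h1.inv_right).inv_left)
    have e2 : ac2 c (2*(k+1)) = ac2 c (2*k) * c (2*k+2) * c (2*k+3) := by
      rw [(by omega : 2*(k+1) = (2*k+1)+1), ac2_succ, (by omega : (2*k+1)+2 = 2*k+3),
        (by omega : (2*k+1) = (2*k)+1), ac2_succ, (by omega : 2*k+2 = (2*k)+2)]
    calc ac2 c (2*k) * (Qk c k)⁻¹ * ((c (2*k+3))⁻¹ * c (2*k+2) * c (2*k+3))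
        = ac2 c (2*k) * ((Qk c k)⁻¹ * (c (2*k+2) * c (2*k+3) * (c (2*k+2))⁻¹)) := by
          rw [hsw]; group
      _ = ac2 c (2*k) * ((c (2*k+2) * c (2*k+3) * (c (2*k+2))⁻¹) * (Qk c k)⁻¹) := by
          rw [h3.eq]
      _ = (ac2 c (2*k) * c (2*k+2) * c (2*k+3)) * ((c (2*k+2))⁻¹ * (Qk c k)⁻¹) := by group
      _ = ac2 c (2*(k+1)) * (Qk c (k+1))⁻¹ := by
          rw [e2, Qk_succ, mul_inv_rev]

include hcomm in
theorem Fform : ∀ k, k ≤ g →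
    ((List.range k).map fun j => c (2*j+1) * c (2*j+2) * (c (2*j+1))⁻¹).prod
      = ac c (2*k) * (Pk c k)⁻¹ := by
  intro k
  induction k with
  | zero => intro _; simp [ac, Pk]
  | succ k ih =>
    intro hb
    rw [range_back, ih (by omega)]
    have h1 : Commute (Pk c k) (c (2*k+1)) :=
      (commute_Pk c g hcomm (2*k+1) k (by omega) (by omega)).symm
    have h2 : Commute (Pk c k) (c (2*k+2)) :=
      (commute_Pk c g hcomm (2*k+2) k (by omega) (by omega)).symm
    have h3 : Commute ((Pk c k)⁻¹) (c (2*k+1) * c (2*k+2) * (c (2*k+1))⁻¹) :=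
      (((h1.mul_right h2).mul_right h1.inv_right).inv_left)
    have e2 : ac c (2*(k+1)) = ac c (2*k) * c (2*k+1) * c (2*k+2) := by
      rw [(by omega : 2*(k+1) = (2*k+1)+1), ac_succ, (by omega : (2*k+1)+1 = 2*k+2),
        (by omega : (2*k+1) = (2*k)+1), ac_succ]
    calc ac c (2*k) * (Pk c k)⁻¹ * (c (2*k+1) * c (2*k+2) * (c (2*k+1))⁻¹)
        = ac c (2*k) * ((Pk c k)⁻¹ * (c (2*k+1) * c (2*k+2) * (c (2*k+1))⁻¹)) := by group
      _ = ac c (2*k) * ((c (2*k+1) * c (2*k+2) * (c (2*k+1))⁻¹) * (Pk c k)⁻¹) := by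
          rw [h3.eq]
      _ = (ac c (2*k) * c (2*k+1) * c (2*k+2)) * ((c (2*k+1))⁻¹ * (Pk c k)⁻¹) := by group
      _ = ac c (2*(k+1)) * (Pk c (k+1))⁻¹ := by
          rw [e2, Pk_succ, mul_inv_rev]

end WithRel2
end St16
namespace St16
variable {G : Type*} [Group G] (c : ℕ → G) (g : ℕ)

section WithRel3
variable
  (hbraid : ∀ i, 1 ≤ i → i + 1 ≤ 2 * g + 1 →
      c i * c (i + 1) * c i = c (i + 1) * c i * c (i + 1))
  (hcomm : ∀ i j, 1 ≤ i → j ≤ 2 * g + 1 → i + 2 ≤ j → c i * c j = c j * c i)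

theorem sb3 : sb c (2*h+3) = c (2*h+3) * (c (2*h+2) * sb c (2*h+1)) := by
  calc sb c (2*h+3) = sb c ((2*h+2)+1) := by rw [show 2*h+3 = (2*h+2)+1 by omega]
    _ = c ((2*h+2)+1) * sb c ((2*h+1)+1) := by
        rw [sb_succ, show 2*h+2 = (2*h+1)+1 by omega]
    _ = c (2*h+3) * (c (2*h+2) * sb c (2*h+1)) := by
        rw [sb_succ, show (2*h+2)+1 = 2*h+3 by omega, show (2*h+1)+1 = 2*h+2 by omega]

include hcomm in
theorem sb_conj (h : ℕ) (h1 : 1 ≤ h) (hb : 2*h+2 ≤ 2*g+1) :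
    sb c (2*h+1) * c (2*h+2)
      = c (2*h+1) * c (2*h+2) * (c (2*h+1))⁻¹ * sb c (2*h+1) := by
  have e : sb c (2*h+1) = c (2*h+1) * sb c (2*h) := by
    rw [show 2*h+1 = (2*h)+1 by omega, sb_succ]
  have hcm : Commute (c (2*h+2)) (sb c (2*h)) :=
    commute_sb c g hcomm (2*h+2) (2*h) (by omega) (by omega)
  calc sb c (2*h+1) * c (2*h+2)
      = c (2*h+1) * (sb c (2*h) * c (2*h+2)) := by rw [e]; group
    _ = c (2*h+1) * (c (2*h+2) * sb c (2*h)) := by rw [← hcm.eq]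
    _ = c (2*h+1) * c (2*h+2) * (c (2*h+1))⁻¹ * (c (2*h+1) * sb c (2*h)) := by group
    _ = c (2*h+1) * c (2*h+2) * (c (2*h+1))⁻¹ * sb c (2*h+1) := by rw [← e]

include hbraid hcomm in
theorem Smaster : ∀ h, 1 ≤ h → h ≤ g →
    c (2*h+1)^(2*h+2) * DD c h * Psi0 c (h-1) * c (2*h+1)^(h+1)
      = Chi c h * sb c (2*h+1) * sb c (2*h+1) := by
  intro h hh
  induction h, hh using Nat.le_induction with
  | base =>
    intro hb
    have hab : c 1 * c 2 * c 1 = c 2 * c 1 * c 2 := by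
      have := hbraid 1 (by omega) (by omega); norm_num at this ⊢; exact this
    have hbt : c 2 * c 3 * c 2 = c 3 * c 2 * c 3 := by
      have := hbraid 2 (by omega) (by omega); norm_num at this ⊢; exact this
    have hat : c 1 * c 3 = c 3 * c 1 := hcomm 1 3 (by omega) (by omega) (by omega)
    have dia := diamond (c 1) (c 2) (c 3) hab hbt hat 1 (1 : G)
    have aux := S1aux (c 1) (c 2) (c 3) hab hbt hat (1 : G)
    have eDD : DD c 1 = (c 3)⁻¹ * c 2 * c 3 * ((c 2)⁻¹ * c 1 * c 2) := by
      simp [DD, db, List.range_succ]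
    have esb : sb c 3 = c 3 * (c 2 * c 1) := by
      simp [sb, List.range_succ]
    have eChi : Chi c 1 = c 1 ^ 2 := by simp [Chi, List.range_succ]
    have ePsi : Psi0 c 0 = 1 := by simp [Psi0]
    rw [show 2*1+2 = 4 by norm_num, show 2*1+1 = 3 by norm_num,
      show (1:ℕ)-1 = 0 by norm_num, show (1:ℕ)+1 = 2 by norm_num,
      eDD, esb, eChi, ePsi]
    calc c 3 ^ 4 * ((c 3)⁻¹ * c 2 * c 3 * ((c 2)⁻¹ * c 1 * c 2)) * 1 * c 3 ^ 2
        = c 3^(2*1+1) * (c 2*(c 3*((c 2)⁻¹*(c 1*(c 2*(c 3^(1+1) * 1)))))) := by group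
      _ = c 1^(1+1) * (c 2*(c 3*(c 1*(c 2*(c 1^(2*1) * 1))))) := dia
      _ = c 1^(1+1) * (c 2*(c 3*(c 1*(c 2*(c 1*(c 1*1)))))) := by
          rw [show (c 1:G)^(2*1) = c 1 * c 1 by rw [pow_two]]; group
      _ = c 1^(1+1) * (c 3*(c 2*(c 1*(c 3*(c 2*(c 1*1)))))) := by rw [aux]
      _ = c 1 ^ 2 * (c 3 * (c 2 * c 1)) * (c 3 * (c 2 * c 1)) := by
          rw [show (c 1:G)^(1+1) = c 1^2 from rfl]; group
  | succ h hh ih =>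
    intro hb
    have IH := ih (by omega)
    -- abbreviations
    have hab : c (2*h+1) * c (2*h+2) * c (2*h+1)
        = c (2*h+2) * c (2*h+1) * c (2*h+2) := by
      have := hbraid (2*h+1) (by omega) (by omega)
      rw [show (2*h+1)+1 = 2*h+2 by omega] at this; exact this
    have hbt : c (2*h+2) * c (2*h+3) * c (2*h+2)
        = c (2*h+3) * c (2*h+2) * c (2*h+3) := by
      have := hbraid (2*h+2) (by omega) (by omega)
      rw [show (2*h+2)+1 = 2*h+3 by omega] at this; exact this
    have hat : c (2*h+1) * c (2*h+3) = c (2*h+3) * c (2*h+1) :=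
      hcomm (2*h+1) (2*h+3) (by omega) (by omega) (by omega)
    -- commutation facts
    have cT'sb : Commute (c (2*h+3)) (sb c (2*h+1)) :=
      commute_sb c g hcomm (2*h+3) (2*h+1) (by omega) (by omega)
    have cT'Chi : Commute (c (2*h+3)) (Chi c h) :=
      commute_Chi c g hcomm (2*h+3) h (by omega) (by omega)
    have cAChi : Commute (c (2*h+1)) (Chi c h) :=
      commute_Chi c g hcomm (2*h+1) h (by omega) (by omega)
    have cBChi : Commute (c (2*h+2)) (Chi c h) :=
      commute_Chi c g hcomm (2*h+2) h (by omega) (by omega)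
    -- expand goal
    rw [show 2*(h+1)+1 = 2*h+3 by omega, show 2*(h+1)+2 = 2*h+4 by omega,
      show (h+1)-1 = (h-1)+1 by omega, show (h+1)+1 = h+2 by omega,
      DD_succ, Psi0_succ, Chi_succ,
      show 2*(h-1)+3 = 2*h+1 by omega, show (h-1)+2 = h+1 by omega, sb3 c]
    have E1 : DD c h * (Psi0 c (h-1) * c (2*h+1)^(h+1))
        = (c (2*h+1)^(2*h+2))⁻¹ * (Chi c h * (sb c (2*h+1) * sb c (2*h+1))) := by
      calc DD c h * (Psi0 c (h-1) * c (2*h+1)^(h+1))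
          = (c (2*h+1)^(2*h+2))⁻¹
              * (c (2*h+1)^(2*h+2) * DD c h * Psi0 c (h-1) * c (2*h+1)^(h+1)) := by group
        _ = _ := by rw [IH]; group
    -- commutes for the big moves
    have m1 : Commute ((c (2*h+3))^(h+2)) (sb c (2*h+1)) := cT'sb.pow_left _
    have m2 : Commute ((c (2*h+3))^(h+2)) (Chi c h) := cT'Chi.pow_left _
    have m3 : Commute ((c (2*h+3))^(h+2)) ((c (2*h+1)^(2*h+2))⁻¹) :=
      (((show Commute (c (2*h+1)) (c (2*h+3)) from hat).symm.pow_pow (h+2) (2*h+2)).inv_right)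
    have M : Commute ((c (2*h+3))^(h+2))
        ((c (2*h+1)^(2*h+2))⁻¹ * (Chi c h * (sb c (2*h+1) * sb c (2*h+1)))) :=
      m3.mul_right (m2.mul_right (m1.mul_right m1))
    have cdbB : Commute (db c (2*h+2)) (Chi c h) := by
      show Commute ((c (2*h+2+1))⁻¹ * c (2*h+2) * c (2*h+2+1)) (Chi c h)
      rw [show 2*h+2+1 = 2*h+3 by omega]
      exact (cT'Chi.inv_left.mul_left cBChi).mul_left cT'Chi
    have cdbA : Commute (db c (2*h+1)) (Chi c h) := by
      show Commute ((c (2*h+1+1))⁻¹ * c (2*h+1) * c (2*h+1+1)) (Chi c h)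
      rw [show 2*h+1+1 = 2*h+2 by omega]
      exact (cBChi.inv_left.mul_left cAChi).mul_left cBChi
    have cpowChi : Commute ((c (2*h+3))^(2*h+4)) (Chi c h) := cT'Chi.pow_left _
    have cinvChi : Commute ((c (2*h+1)^(2*h+2))⁻¹) (Chi c h) := (cAChi.pow_left _).inv_left
    -- conjugation fact for sb
    have SC := sb_conj c g hcomm h hh (by omega)
    -- diamond instance
    have dia := diamond (c (2*h+1)) (c (2*h+2)) (c (2*h+3)) hab hbt hat (h+1) (1:G)
    rw [show 2*(h+1)+1 = 2*h+3 by omega, show (h+1)+1 = h+2 by omega,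
      show 2*(h+1) = 2*h+2 by omega] at dia
    have aux2 : ∀ X : G, c (2*h+3)*(c (2*h+2)*(c (2*h+3)*(c (2*h+1)*(c (2*h+2)*X))))
        = c (2*h+2)*(c (2*h+3)*(c (2*h+1)*(c (2*h+2)*(c (2*h+1)*X)))) := fun X => by
      rw [← Abtb (c (2*h+2)) (c (2*h+3)) hbt (c (2*h+1)*(c (2*h+2)*X)),
        ← Aaba (c (2*h+1)) (c (2*h+2)) hab X]
    have CORE : (c (2*h+3))^(2*h+4) * db c (2*h+2) * db c (2*h+1) * (c (2*h+3))^(h+2)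
          * (c (2*h+1)^(2*h+2))⁻¹
        = c (2*h+1)^(h+2) * (c (2*h+3) * c (2*h+2) * c (2*h+3)
          * (c (2*h+1) * c (2*h+2) * (c (2*h+1))⁻¹)) := by
      calc (c (2*h+3))^(2*h+4) * db c (2*h+2) * db c (2*h+1) * (c (2*h+3))^(h+2)
            * (c (2*h+1)^(2*h+2))⁻¹
          = (c (2*h+3))^(2*h+3) * (c (2*h+2)*(c (2*h+3)*((c (2*h+2))⁻¹*(c (2*h+1)
              *(c (2*h+2)*((c (2*h+3))^(h+2) * 1)))))) * (c (2*h+1)^(2*h+2))⁻¹ := by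
            show (c (2*h+3))^(2*h+4) * ((c (2*h+2+1))⁻¹ * c (2*h+2) * c (2*h+2+1))
              * ((c (2*h+1+1))⁻¹ * c (2*h+1) * c (2*h+1+1)) * (c (2*h+3))^(h+2)
              * (c (2*h+1)^(2*h+2))⁻¹ = _
            rw [show 2*h+2+1 = 2*h+3 by omega, show 2*h+1+1 = 2*h+2 by omega,
              show (c (2*h+3))^(2*h+4) = (c (2*h+3))^(2*h+3) * c (2*h+3) by
                rw [← pow_succ]]
            group
        _ = c (2*h+1)^(h+2) * (c (2*h+2)*(c (2*h+3)*(c (2*h+1)*(c (2*h+2)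
              *(c (2*h+1)^(2*h+2) * 1))))) * (c (2*h+1)^(2*h+2))⁻¹ := by rw [dia]
        _ = c (2*h+1)^(h+2) * (c (2*h+2)*(c (2*h+3)*(c (2*h+1)*(c (2*h+2)
              *(c (2*h+1)*((c (2*h+1))^(2*h+1) * 1)))))) * (c (2*h+1)^(2*h+2))⁻¹ := by
            rw [show (c (2*h+1))^(2*h+2) = c (2*h+1) * (c (2*h+1))^(2*h+1) by
              rw [← pow_succ']]
            group
        _ = c (2*h+1)^(h+2) * (c (2*h+3)*(c (2*h+2)*(c (2*h+3)*(c (2*h+1)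
              *(c (2*h+2)*((c (2*h+1))^(2*h+1) * 1)))))) * (c (2*h+1)^(2*h+2))⁻¹ := by
            rw [aux2 ((c (2*h+1))^(2*h+1) * 1)]
        _ = _ := by
            rw [show (c (2*h+1))^(2*h+2) = (c (2*h+1))^(2*h+1) * c (2*h+1) by
              rw [← pow_succ]]
            group
    have cMW : Commute ((c (2*h+1)^(h+2) * (c (2*h+3) * c (2*h+2) * c (2*h+3)
        * (c (2*h+1) * c (2*h+2) * (c (2*h+1))⁻¹)))) (Chi c h) :=
      ((cAChi.pow_left _).mul_left
        (((cT'Chi.mul_left cBChi).mul_left cT'Chi).mul_left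
          ((cAChi.mul_left cBChi).mul_left cAChi.inv_left))).symm.symm
    -- assemble
    calc (c (2*h+3))^(2*h+4) * (db c (2*h+2) * (db c (2*h+1) * DD c h))
          * (Psi0 c (h-1) * c (2*h+1)^(h+1)) * (c (2*h+3))^(h+2)
        = (c (2*h+3))^(2*h+4) * db c (2*h+2) * db c (2*h+1)
            * (DD c h * (Psi0 c (h-1) * c (2*h+1)^(h+1))) * (c (2*h+3))^(h+2) := by group
      _ = (c (2*h+3))^(2*h+4) * db c (2*h+2) * db c (2*h+1)
            * ((c (2*h+1)^(2*h+2))⁻¹ * (Chi c h * (sb c (2*h+1) * sb c (2*h+1))))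
            * (c (2*h+3))^(h+2) := by rw [E1]
      _ = (c (2*h+3))^(2*h+4) * db c (2*h+2) * db c (2*h+1) * (c (2*h+3))^(h+2)
            * ((c (2*h+1)^(2*h+2))⁻¹ * (Chi c h * (sb c (2*h+1) * sb c (2*h+1)))) := by
          rw [mul_assoc _ _ ((c (2*h+3))^(h+2)), ← M.eq]; group
      _ = ((c (2*h+3))^(2*h+4) * db c (2*h+2) * db c (2*h+1) * (c (2*h+3))^(h+2)
            * (c (2*h+1)^(2*h+2))⁻¹) * (Chi c h * (sb c (2*h+1) * sb c (2*h+1))) := by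
          group
      _ = (c (2*h+1)^(h+2) * (c (2*h+3) * c (2*h+2) * c (2*h+3)
            * (c (2*h+1) * c (2*h+2) * (c (2*h+1))⁻¹)))
            * (Chi c h * (sb c (2*h+1) * sb c (2*h+1))) := by rw [CORE]
      _ = ((c (2*h+1)^(h+2) * (c (2*h+3) * c (2*h+2) * c (2*h+3)
            * (c (2*h+1) * c (2*h+2) * (c (2*h+1))⁻¹))) * Chi c h)
            * (sb c (2*h+1) * sb c (2*h+1)) := by group
      _ = (Chi c h * (c (2*h+1)^(h+2) * (c (2*h+3) * c (2*h+2) * c (2*h+3)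
            * (c (2*h+1) * c (2*h+2) * (c (2*h+1))⁻¹))))
            * (sb c (2*h+1) * sb c (2*h+1)) := by rw [cMW.eq]
      _ = Chi c h * c (2*h+1)^(h+2) * (c (2*h+3) * c (2*h+2) * c (2*h+3))
            * ((c (2*h+1) * c (2*h+2) * (c (2*h+1))⁻¹) * sb c (2*h+1)) * sb c (2*h+1) := by
          group
      _ = Chi c h * c (2*h+1)^(h+2) * (c (2*h+3) * c (2*h+2) * c (2*h+3))
            * (sb c (2*h+1) * c (2*h+2)) * sb c (2*h+1) := by rw [← SC]
      _ = Chi c h * c (2*h+1)^(h+2) * (c (2*h+3) * c (2*h+2) * (c (2*h+3) * sb c (2*h+1))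
            * (c (2*h+2) * sb c (2*h+1))) := by group
      _ = Chi c h * c (2*h+1)^(h+2) * (c (2*h+3) * c (2*h+2) * (sb c (2*h+1) * c (2*h+3))
            * (c (2*h+2) * sb c (2*h+1))) := by rw [cT'sb.eq]
      _ = Chi c h * c (2*h+1)^(h+2) * (c (2*h+3) * (c (2*h+2) * sb c (2*h+1)))
            * (c (2*h+3) * (c (2*h+2) * sb c (2*h+1))) := by group
end WithRel3
end St16
namespace St16
variable {G : Type*} [Group G] (c : ℕ → G) (g : ℕ)

theorem prodAsc_eq : prodAsc c 1 (2*g) = ac c (2*g) := by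
  unfold prodAsc ac; rw [Nat.add_sub_cancel]

theorem prodDesc_eq : prodDesc c (2*g) 1 = sb c (2*g) := by
  unfold prodDesc sb; rw [Nat.add_sub_cancel]

theorem phiOdd_zero : phiOdd c 0 = c 1 := by simp [phiOdd]

theorem phiOdd_succ (l : ℕ) : phiOdd c (l+1) = c (2*l+3)^(l+2) * phiOdd c l := by
  unfold phiOdd
  rw [range_front, Nat.sub_zero, show 2*(l+1)+1 = 2*l+3 by omega,
    show l+1+1 = l+2 by omega,
    map_range_prod_congr (l+1) _ (fun j => c (2*(l-j)+1)^(l-j+1)) (fun i hi => by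
      rw [show l+1-(i+1) = l-i by omega])]

section WithRel4
variable
  (hbraid : ∀ i, 1 ≤ i → i + 1 ≤ 2 * g + 1 →
      c i * c (i + 1) * c i = c (i + 1) * c i * c (i + 1))
  (hcomm : ∀ i j, 1 ≤ i → j ≤ 2 * g + 1 → i + 2 ≤ j → c i * c j = c j * c i)

include hcomm in
theorem PHIlem : ∀ h, 1 ≤ h → h ≤ g →
    phiOdd c h = c (2*h+1)^(h+1) * (Psi0 c (h-1) * c 1) := by
  intro h h1
  induction h, h1 using Nat.le_induction with
  | base =>
    intro _
    show phiOdd c (0+1) = _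
    rw [phiOdd_succ, phiOdd_zero]
    simp [Psi0]
  | succ h h1 ih =>
    intro hb
    rw [phiOdd_succ, ih (by omega),
      show 2*(h+1)+1 = 2*h+3 by omega, show (h+1)+1 = h+2 by omega,
      show (h+1)-1 = (h-1)+1 by omega, Psi0_succ,
      show 2*(h-1)+3 = 2*h+1 by omega, show (h-1)+2 = h+1 by omega]
    have cm : Commute (c (2*h+1)^(h+1)) (Psi0 c (h-1)) :=
      (commute_Psi0 c g hcomm (2*h+1) (h-1) (by omega) (by omega)).pow_left _
    rw [show c (2*h+1)^(h+1) * (Psi0 c (h-1) * c 1)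
        = Psi0 c (h-1) * c (2*h+1)^(h+1) * c 1 from by rw [← mul_assoc, cm.eq]]

include hcomm in
theorem CHIlem : ∀ h, 1 ≤ h → h ≤ g →
    Chi c h = Psi0 c (h-1) * (c 1 * Pk c h) := by
  intro h h1
  induction h, h1 using Nat.le_induction with
  | base =>
    intro _
    show Chi c (0+1) = _
    rw [Chi_succ]
    simp [Chi, Psi0, Pk, List.range_succ, pow_two]
  | succ h h1 ih =>
    intro hb
    rw [Chi_succ, ih (by omega), Pk_succ,
      show (h+1)-1 = (h-1)+1 by omega, Psi0_succ,
      show 2*(h-1)+3 = 2*h+1 by omega, show (h-1)+2 = h+1 by omega]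
    have cz1 : Commute (c (2*h+1)) (c 1) :=
      (comm2 c g hcomm 1 (2*h+1) (by omega) (by omega) (by omega)).symm
    have czP : Commute (c (2*h+1)) (Pk c h) :=
      commute_Pk c g hcomm (2*h+1) h (by omega) (by omega)
    have big : Commute (c (2*h+1)^(h+1)) (c 1 * Pk c h) :=
      ((cz1.mul_right czP).pow_left _)
    calc (Psi0 c (h-1) * (c 1 * Pk c h)) * c (2*h+1)^(h+2)
        = Psi0 c (h-1) * ((c 1 * Pk c h) * c (2*h+1)^(h+1)) * c (2*h+1) := by
          rw [show c (2*h+1)^(h+2) = c (2*h+1)^(h+1) * c (2*h+1) from by rw [← pow_succ]]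
          group
      _ = Psi0 c (h-1) * (c (2*h+1)^(h+1) * (c 1 * Pk c h)) * c (2*h+1) := by
          rw [← big.eq]
      _ = Psi0 c (h-1) * c (2*h+1)^(h+1) * (c 1 * (Pk c h * c (2*h+1))) := by group

end WithRel4
end St16

open St16

/-- the positive relator `H(g,1)` of Theorem 5.1: with
`d̄ i = (c (i+1))⁻¹ * c i * c (i+1)`, `e (i+1) = c i * c (i+1) * (c i)⁻¹`,
`φ = c (2g+1)^{g+1} c (2g-1)^{g} ⋯ c 3 ^ 2 c 1`, assuming the braid relations,
the hyperelliptic relation, the centrality of `c (2g) ⋯ c 1 c 1 ⋯ c (2g)` relative to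
`c (2g+1)`, and the daisy relation, one has
`(φ⁻¹ d̄ (2g) φ) ⋯ (φ⁻¹ d̄ 1 φ) · d̄ 2 d̄ 4 ⋯ d̄ (2g) · e 2 e 4 ⋯ e (2g) ·
x 1 ⋯ x g · c (2g+1)^{2g+6} = 1`. -/

theorem statement16 {G : Type*} [Group G] (g : ℕ) (hg : 3 ≤ g) (c x : ℕ → G)
    (hbraid : ∀ i, 1 ≤ i → i + 1 ≤ 2 * g + 1 →
      c i * c (i + 1) * c i = c (i + 1) * c i * c (i + 1))
    (hcomm : ∀ i j, 1 ≤ i → j ≤ 2 * g + 1 → i + 2 ≤ j → c i * c j = c j * c i)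
    (hhyper : (prodAsc c 1 (2 * g) * (c (2 * g + 1)) ^ 2 * prodDesc c (2 * g) 1) ^ 2 = 1)
    (hcentral : Commute (prodDesc c (2 * g) 1 * prodAsc c 1 (2 * g)) (c (2 * g + 1)))
    (hdaisy : ((List.range g).map fun j => x (j + 1)).prod =
      ((List.range g).map fun j => c (2 * j + 1)).prod * (c (2 * g + 1)) ^ (g - 2)) :
    (((List.range (2 * g)).map fun j =>
        (phiOdd c g)⁻¹ *
          ((c (2 * g - j + 1))⁻¹ * c (2 * g - j) * c (2 * g - j + 1)) *
          phiOdd c g).prod) *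
      (((List.range g).map fun j =>
        (c (2 * j + 3))⁻¹ * c (2 * j + 2) * c (2 * j + 3)).prod) *
      (((List.range g).map fun j =>
        c (2 * j + 1) * c (2 * j + 2) * (c (2 * j + 1))⁻¹).prod) *
      (((List.range g).map fun j => x (j + 1)).prod) *
      (c (2 * g + 1)) ^ (2 * g + 6) = 1 := by
  have key1 : ((List.range (2*g)).map fun j =>
      (phiOdd c g)⁻¹ * ((c (2*g - j + 1))⁻¹ * c (2*g - j) * c (2*g - j + 1)) * phiOdd c g).prod
      = (phiOdd c g)⁻¹ * DD c g * phiOdd c g := prod_conj _ _ _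
  have key2 : ((List.range g).map fun j => c (2*j+1)).prod = Pk c g := rfl
  have hgp : (c (2*g+1))^(3*g+4) = (c (2*g+1))^(g-2) * (c (2*g+1))^(2*g+6) := by
    rw [← pow_add]; congr 1; omega
  have hg2 : (c (2*g+1))^(g-2) = (c (2*g+1))^(3*g+4) * ((c (2*g+1))^(2*g+6))⁻¹ := by
    rw [hgp]; group
  rw [hdaisy, key1, key2, Eform c g hbraid hcomm g (le_refl g),
    Fform c g hcomm g (le_refl g), hg2]
  -- ==================== infrastructure ====================
  have fs : ac c (2*g+1) = ac c (2*g) * c (2*g+1) := ac_succ c (2*g)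
  have fsb : sb c (2*g+1) = c (2*g+1) * sb c (2*g) := sb_succ c (2*g)
  have fc1S2 : c 1 * ac2 c (2*g) = ac c (2*g+1) := (ac_front c (2*g)).symm
  have fphi : phiOdd c g = c (2*g+1)^(g+1) * (Psi0 c (g-1) * c 1) :=
    PHIlem c g hcomm g (by omega) (le_refl g)
  have fchi : Chi c g = Psi0 c (g-1) * (c 1 * Pk c g) :=
    CHIlem c g hcomm g (by omega) (le_refl g)
  have Sg : c (2*g+1)^(2*g+2) * DD c g * Psi0 c (g-1) * c (2*g+1)^(g+1)
      = Chi c g * sb c (2*g+1) * sb c (2*g+1) :=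
    Smaster c g hbraid hcomm g (by omega) (le_refl g)
  -- iota' = sb(2g+1) * ac(2g+1)
  have fiota2 : (sb c (2*g+1) * ac c (2*g+1)) * (sb c (2*g+1) * ac c (2*g+1)) = 1 := by
    have h2 := hhyper
    rw [pow_two, prodAsc_eq, prodDesc_eq, pow_two] at h2
    calc (sb c (2*g+1) * ac c (2*g+1)) * (sb c (2*g+1) * ac c (2*g+1))
        = (c (2*g+1) * sb c (2*g)) *
            ((ac c (2*g) * (c (2*g+1) * c (2*g+1)) * sb c (2*g)) *
             (ac c (2*g) * (c (2*g+1) * c (2*g+1)) * sb c (2*g))) *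
            (c (2*g+1) * sb c (2*g))⁻¹ := by rw [fsb, fs]; group
      _ = (c (2*g+1) * sb c (2*g)) * (c (2*g+1) * sb c (2*g))⁻¹ := by rw [h2]; group
      _ = 1 := by group
  have fiotau : Commute (sb c (2*g+1) * ac c (2*g+1)) (c (2*g+1)) := by
    have hc : Commute (sb c (2*g) * ac c (2*g)) (c (2*g+1)) := by
      rw [← prodAsc_eq, ← prodDesc_eq]; exact hcentral
    have e : sb c (2*g+1) * ac c (2*g+1)
        = c (2*g+1) * ((sb c (2*g) * ac c (2*g)) * c (2*g+1)) := by
      rw [fsb, fs]; group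
    rw [e]
    exact (Commute.refl _).mul_left (hc.mul_left (Commute.refl _))
  have hiota : ∀ i, 1 ≤ i → i ≤ 2*g+1 →
      Commute (sb c (2*g+1) * ac c (2*g+1)) (c i) := by
    intro i h1 h2
    rcases Nat.lt_or_ge i (2*g+1) with hlt | hge
    · have e1 : ac c (2*g+1) * c i = c (i+1) * ac c (2*g+1) :=
        ac_shift c g hbraid hcomm i h1 (2*g+1) (by omega) (le_refl _)
      have e2 : sb c (2*g+1) * c (i+1) = c i * sb c (2*g+1) :=
        sb_shift c g hbraid hcomm i h1 (2*g+1) (by omega) (le_refl _)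
      show (sb c (2*g+1) * ac c (2*g+1)) * c i = c i * (sb c (2*g+1) * ac c (2*g+1))
      calc (sb c (2*g+1) * ac c (2*g+1)) * c i
          = sb c (2*g+1) * (ac c (2*g+1) * c i) := by group
        _ = sb c (2*g+1) * (c (i+1) * ac c (2*g+1)) := by rw [e1]
        _ = (sb c (2*g+1) * c (i+1)) * ac c (2*g+1) := by group
        _ = (c i * sb c (2*g+1)) * ac c (2*g+1) := by rw [e2]
        _ = c i * (sb c (2*g+1) * ac c (2*g+1)) := by group
    · have hi : i = 2*g+1 := by omega
      subst hi
      exact fiotau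
  have cQ : Commute (sb c (2*g+1) * ac c (2*g+1)) (Qk c g) := by
    unfold Qk
    exact commute_listprod _ _ (fun j hj =>
      hiota (2*j+2) (by omega) (by have := List.mem_range.1 hj; omega))
  have cT : Commute (sb c (2*g+1) * ac c (2*g+1)) (ac c (2*g)) := by
    unfold ac
    exact commute_listprod _ _ (fun j hj =>
      hiota (1+j) (by omega) (by have := List.mem_range.1 hj; omega))
  have cU : Commute (sb c (2*g+1) * ac c (2*g+1)) ((c (2*g+1))^(3*g+4)) :=
    (hiota (2*g+1) (by omega) (le_refl _)).pow_right _
  have cU3 : Commute (sb c (2*g+1) * ac c (2*g+1)) ((c (2*g+1))^(3*g+3)) :=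
    (hiota (2*g+1) (by omega) (le_refl _)).pow_right _
  have hQinv : sb c (2*g+1) * (Qk c g)⁻¹ = (Pk c g)⁻¹ * sb c (2*g+1) := by
    have hsq := sbQ c g hbraid hcomm g (le_refl g)
    calc sb c (2*g+1) * (Qk c g)⁻¹
        = (Pk c g)⁻¹ * ((Pk c g * sb c (2*g+1)) * (Qk c g)⁻¹) := by group
      _ = (Pk c g)⁻¹ * ((sb c (2*g+1) * Qk c g) * (Qk c g)⁻¹) := by rw [← hsq]
      _ = (Pk c g)⁻¹ * sb c (2*g+1) := by group
  have cuPs : Commute ((c (2*g+1))^(g+1)) (Psi0 c (g-1)) :=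
    (commute_Psi0 c g hcomm (2*g+1) (g-1) (by omega) (le_refl _)).pow_left _
  have cuPs3 : Commute ((c (2*g+1))^(3*g+3)) (Psi0 c (g-1)) :=
    (commute_Psi0 c g hcomm (2*g+1) (g-1) (by omega) (le_refl _)).pow_left _
  have cuc1 : Commute (c 1) ((c (2*g+1))^(3*g+3)) :=
    (comm2 c g hcomm 1 (2*g+1) (by omega) (le_refl _) (by omega)).pow_right _
  have hmove : (sb c (2*g+1) * ac c (2*g+1)) *
        ((Qk c g)⁻¹ * (ac c (2*g) * (c (2*g+1))^(3*g+4)))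
      = (Qk c g)⁻¹ * (ac c (2*g) * ((c (2*g+1))^(3*g+4)
          * (sb c (2*g+1) * ac c (2*g+1)))) := by
    calc (sb c (2*g+1) * ac c (2*g+1)) * ((Qk c g)⁻¹ * (ac c (2*g) * (c (2*g+1))^(3*g+4)))
        = ((sb c (2*g+1) * ac c (2*g+1)) * (Qk c g)⁻¹) * (ac c (2*g) * (c (2*g+1))^(3*g+4)) := by
          group
      _ = ((Qk c g)⁻¹ * (sb c (2*g+1) * ac c (2*g+1))) * (ac c (2*g) * (c (2*g+1))^(3*g+4)) := by
          rw [cQ.inv_right.eq]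
      _ = (Qk c g)⁻¹ * (((sb c (2*g+1) * ac c (2*g+1)) * ac c (2*g)) * (c (2*g+1))^(3*g+4)) := by
          group
      _ = (Qk c g)⁻¹ * ((ac c (2*g) * (sb c (2*g+1) * ac c (2*g+1))) * (c (2*g+1))^(3*g+4)) := by
          rw [cT.eq]
      _ = (Qk c g)⁻¹ * (ac c (2*g) * ((sb c (2*g+1) * ac c (2*g+1)) * (c (2*g+1))^(3*g+4))) := by
          group
      _ = (Qk c g)⁻¹ * (ac c (2*g) * ((c (2*g+1))^(3*g+4) * (sb c (2*g+1) * ac c (2*g+1)))) := by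
          rw [cU.eq]
  have hmove2 : (sb c (2*g+1) * ac c (2*g+1)) *
        ((c (2*g+1))^(3*g+3) * (sb c (2*g+1) * ac c (2*g+1)))
      = (c (2*g+1))^(3*g+3) * ((sb c (2*g+1) * ac c (2*g+1))
          * (sb c (2*g+1) * ac c (2*g+1))) := by
    rw [← mul_assoc, cU3.eq, mul_assoc]
  have MAIN : c (2*g+1)^(2*g+2) * (DD c g * (phiOdd c g * (ac2 c (2*g)
        * ((Qk c g)⁻¹ * (ac c (2*g) * (c (2*g+1))^(3*g+4))))))
      = c (2*g+1)^(2*g+2) * phiOdd c g := by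
    calc c (2*g+1)^(2*g+2) * (DD c g * (phiOdd c g * (ac2 c (2*g)
          * ((Qk c g)⁻¹ * (ac c (2*g) * (c (2*g+1))^(3*g+4))))))
        = c (2*g+1)^(2*g+2) * (DD c g * ((c (2*g+1)^(g+1) * (Psi0 c (g-1) * c 1))
            * (ac2 c (2*g) * ((Qk c g)⁻¹ * (ac c (2*g) * (c (2*g+1))^(3*g+4)))))) := by
          rw [fphi]
      _ = (c (2*g+1)^(2*g+2) * DD c g * Psi0 c (g-1) * c (2*g+1)^(g+1))
            * ((c 1 * ac2 c (2*g)) * ((Qk c g)⁻¹ * (ac c (2*g) * (c (2*g+1))^(3*g+4)))) := by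
          rw [show (c (2*g+1))^(g+1) * (Psi0 c (g-1) * c 1)
            = Psi0 c (g-1) * (c (2*g+1))^(g+1) * c 1 from by rw [← mul_assoc, cuPs.eq]]
          group
      _ = (Chi c g * sb c (2*g+1) * sb c (2*g+1))
            * (ac c (2*g+1) * ((Qk c g)⁻¹ * (ac c (2*g) * (c (2*g+1))^(3*g+4)))) := by
          rw [Sg, fc1S2]
      _ = Chi c g * (sb c (2*g+1) * ((sb c (2*g+1) * ac c (2*g+1))
            * ((Qk c g)⁻¹ * (ac c (2*g) * (c (2*g+1))^(3*g+4))))) := by group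
      _ = Chi c g * (sb c (2*g+1) * ((Qk c g)⁻¹ * (ac c (2*g)
            * ((c (2*g+1))^(3*g+4) * (sb c (2*g+1) * ac c (2*g+1)))))) := by rw [hmove]
      _ = Chi c g * (((Pk c g)⁻¹ * sb c (2*g+1)) * (ac c (2*g)
            * ((c (2*g+1))^(3*g+4) * (sb c (2*g+1) * ac c (2*g+1))))) := by
          rw [show sb c (2*g+1) * ((Qk c g)⁻¹ * (ac c (2*g)
              * ((c (2*g+1))^(3*g+4) * (sb c (2*g+1) * ac c (2*g+1)))))
            = ((Pk c g)⁻¹ * sb c (2*g+1)) * (ac c (2*g)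
              * ((c (2*g+1))^(3*g+4) * (sb c (2*g+1) * ac c (2*g+1))))
            from by rw [← mul_assoc, hQinv]]
      _ = Chi c g * ((Pk c g)⁻¹ * ((sb c (2*g+1) * (ac c (2*g) * c (2*g+1)))
            * ((c (2*g+1))^(3*g+3) * (sb c (2*g+1) * ac c (2*g+1))))) := by
          rw [show (c (2*g+1))^(3*g+4) = c (2*g+1) * (c (2*g+1))^(3*g+3) from by
            rw [show 3*g+4 = (3*g+3)+1 by omega, pow_succ']]
          group
      _ = Chi c g * ((Pk c g)⁻¹ * ((sb c (2*g+1) * ac c (2*g+1))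
            * ((c (2*g+1))^(3*g+3) * (sb c (2*g+1) * ac c (2*g+1))))) := by rw [← fs]
      _ = Chi c g * ((Pk c g)⁻¹ * ((c (2*g+1))^(3*g+3)
            * ((sb c (2*g+1) * ac c (2*g+1)) * (sb c (2*g+1) * ac c (2*g+1))))) := by
          rw [hmove2]
      _ = Chi c g * ((Pk c g)⁻¹ * (c (2*g+1))^(3*g+3)) := by rw [fiota2]; group
      _ = (Psi0 c (g-1) * (c 1 * Pk c g)) * ((Pk c g)⁻¹ * (c (2*g+1))^(3*g+3)) := by
          rw [fchi]
      _ = Psi0 c (g-1) * (c 1 * (c (2*g+1))^(3*g+3)) := by group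
      _ = Psi0 c (g-1) * ((c (2*g+1))^(3*g+3) * c 1) := by rw [cuc1.eq]
      _ = (c (2*g+1))^(3*g+3) * (Psi0 c (g-1) * c 1) := by
          rw [← mul_assoc, ← cuPs3.eq, mul_assoc]
      _ = c (2*g+1)^(2*g+2) * (c (2*g+1)^(g+1) * (Psi0 c (g-1) * c 1)) := by
          rw [show (c (2*g+1))^(3*g+3) = (c (2*g+1))^(2*g+2) * (c (2*g+1))^(g+1) from by
            rw [← pow_add]; congr 1; omega]
          group
      _ = c (2*g+1)^(2*g+2) * phiOdd c g := by rw [← fphi]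
  have MAIN' : DD c g * (phiOdd c g * (ac2 c (2*g)
        * ((Qk c g)⁻¹ * (ac c (2*g) * (c (2*g+1))^(3*g+4)))))
      = phiOdd c g := mul_left_cancel MAIN
  calc (phiOdd c g)⁻¹ * DD c g * phiOdd c g * (ac2 c (2*g) * (Qk c g)⁻¹)
        * (ac c (2*g) * (Pk c g)⁻¹)
        * (Pk c g * ((c (2*g+1))^(3*g+4) * ((c (2*g+1))^(2*g+6))⁻¹))
        * (c (2*g+1))^(2*g+6)
      = (phiOdd c g)⁻¹ * (DD c g * (phiOdd c g * (ac2 c (2*g)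
          * ((Qk c g)⁻¹ * (ac c (2*g) * (c (2*g+1))^(3*g+4)))))) := by group
    _ = (phiOdd c g)⁻¹ * phiOdd c g := by rw [MAIN']
    _ = 1 := by group
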